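/- Under the hypotheses of the previous statement, if additionally β' ∉ U_{γ'}^j, then (δ₂ - (4ε/10)(1+c))·d_Γ(β') ≤ |β_j - γ'_j| ≤ (1/δ₁ + (4ε/10)(1+c))·d_Γ(β'), where c = (4ε/10 + 1/δ₁)/(δ₂ - 4ε/10). -/
import Mathlib


open Metric

private lemma abs_apply_le_norm (x : EuclideanSpace ℝ (Fin 3)) (j : Fin 3) :
    |x j| ≤ ‖x‖ := by
  rw [EuclideanSpace.norm_eq, ← Real.sqrt_sq (abs_nonneg (x j))]
  apply Real.sqrt_le_sqrt
  have h := Finset.single_le_sum (f := fun i => ‖x i‖ ^ 2)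
    (fun i _ => sq_nonneg _) (Finset.mem_univ j)
  simpa [sq_abs] using h

/-- Lacunary scale comparability: under the hypotheses of the lacunary scale bound and
additionally `β' ∉ U_{γ'}^j`, one has
`(δ₂ - (4ε/10)(1+c))·d_Γ(β') ≤ |β_j - γ'_j| ≤ (1/δ₁ + (4ε/10)(1+c))·d_Γ(β')`. -/
theorem lacunary_scale_comparability (θ₀ : ℝ) (hθ0 : 0 ≤ θ₀) (hθ6 : θ₀ < Real.pi / 6)
    (j₀ : Fin 3) (Γ : Set (EuclideanSpace ℝ (Fin 3)))
    (hΓV : Γ ⊆ {ξ : EuclideanSpace ℝ (Fin 3) | ξ 0 + ξ 1 + ξ 2 = 0})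
    (hclosed : IsClosed Γ)
    (hcone : ∀ γ ∈ Γ, ∀ γ' ∈ Γ, γ ≠ γ' →
      Real.sqrt 6 / 3 * ‖γ - γ'‖ * Real.cos θ₀ < |(γ - γ') j₀|)
    (θ₁ δ₁ δ₂ : ℝ)
    (hθ₁ : θ₁ = Real.pi / 18 - θ₀ / 3)
    (hδ₁ : δ₁ = Real.sin θ₁)
    (hδ₂ : δ₂ = Real.sqrt 6 / 3 * Real.cos (Real.pi / 3 + θ₀ + θ₁))
    (ε c : ℝ) (hε : 0 < ε) (hεδ : 4 * ε / 10 < δ₂)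
    (hc : c = (4 * ε / 10 + 1 / δ₁) / (δ₂ - 4 * ε / 10))
    (hεδ' : 4 * ε / 10 * (1 + c) < δ₂)
    (γ γ' : EuclideanSpace ℝ (Fin 3)) (hγ : γ ∈ Γ) (hγ' : γ' ∈ Γ)
    (j : Fin 3) (horder : γ j ≤ γ' j)
    (β β' : EuclideanSpace ℝ (Fin 3))
    (hβV : β ∈ {ξ : EuclideanSpace ℝ (Fin 3) | ξ 0 + ξ 1 + ξ 2 = 0})
    (hβ'V : β' ∈ {ξ : EuclideanSpace ℝ (Fin 3) | ξ 0 + ξ 1 + ξ 2 = 0})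
    (hβW : ‖β - γ‖ ≤ (1 / δ₁) * infDist β Γ)
    (hβU : ¬ |β j - γ j| ≤ δ₂ * ‖β - γ‖)
    (hβj : β j < γ j)
    (hβ'W : ‖β' - γ'‖ ≤ (1 / δ₁) * infDist β' Γ)
    (hβ'U : ¬ |β' j - γ' j| ≤ δ₂ * ‖β' - γ'‖)
    (hoverlap : |β j - β' j| ≤ 4 * ε / 10 * (infDist β Γ + infDist β' Γ)) :
    (δ₂ - 4 * ε / 10 * (1 + c)) * infDist β' Γ ≤ |β j - γ' j| ∧
      |β j - γ' j| ≤ (1 / δ₁ + 4 * ε / 10 * (1 + c)) * infDist β' Γ := by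
  push_neg at hβU hβ'U
  set dβ := infDist β Γ with hdβ
  set dβ' := infDist β' Γ with hdβ'
  have hdβ0 : 0 ≤ dβ := infDist_nonneg
  have hdβ'0 : 0 ≤ dβ' := infDist_nonneg
  have hδ₂pos : 0 < δ₂ := lt_trans (by positivity) hεδ
  -- d(β) ≤ ‖β - γ‖, d(β') ≤ ‖β' - γ'‖
  have h1 : dβ ≤ ‖β - γ‖ := by
    have := infDist_le_dist_of_mem (x := β) hγ
    rwa [dist_eq_norm] at this
  have h1' : dβ' ≤ ‖β' - γ'‖ := by
    have := infDist_le_dist_of_mem (x := β') hγ'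
    rwa [dist_eq_norm] at this
  -- δ₂ d(β) < |β j - γ j|, δ₂ d(β') < |β' j - γ' j|
  have h2 : δ₂ * dβ < |β j - γ j| :=
    lt_of_le_of_lt (by nlinarith) hβU
  have h2' : δ₂ * dβ' < |β' j - γ' j| :=
    lt_of_le_of_lt (by nlinarith) hβ'U
  -- |β' j - γ' j| ≤ (1/δ₁) d(β')
  have hcomp' : |β' j - γ' j| ≤ ‖β' - γ'‖ := by
    have := abs_apply_le_norm (β' - γ') j
    simpa using this
  have h3' : |β' j - γ' j| ≤ (1 / δ₁) * dβ' := le_trans hcomp' hβ'W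
  -- d(β) ≤ c · d(β')
  have habs1 : γ j - β j = |β j - γ j| := by
    rw [abs_sub_comm, abs_of_pos (by linarith)]
  have hkey : dβ ≤ c * dβ' := by
    have hstep : δ₂ * dβ < γ j - β j := by rw [habs1]; exact h2
    have hchain : γ j - β j ≤ (1 / δ₁) * dβ' + 4 * ε / 10 * (dβ + dβ') := by
      have e1 : γ j - β j = (γ j - γ' j) + (γ' j - β' j) + (β' j - β j) := by ring
      have e2 : γ' j - β' j ≤ |β' j - γ' j| := by
        rw [abs_sub_comm]; exact le_abs_self _
      have e3 : β' j - β j ≤ |β j - β' j| := by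
        rw [abs_sub_comm]; exact le_abs_self _
      linarith [le_trans e3 hoverlap, le_trans e2 h3']
    have hpos : 0 < δ₂ - 4 * ε / 10 := by linarith
    have hcmul : c * (δ₂ - 4 * ε / 10) = 4 * ε / 10 + 1 / δ₁ := by
      rw [hc]; exact div_mul_cancel₀ _ hpos.ne'
    have hB : dβ * (δ₂ - 4 * ε / 10) ≤ (c * dβ') * (δ₂ - 4 * ε / 10) := by
      have hE : (c * dβ') * (δ₂ - 4 * ε / 10) = (4 * ε / 10 + 1 / δ₁) * dβ' := by
        rw [mul_right_comm, hcmul]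
      rw [hE]; linarith
    exact le_of_mul_le_mul_right hB hpos
  have hov : |β j - β' j| ≤ 4 * ε / 10 * (1 + c) * dβ' := by
    have h4 := mul_le_mul_of_nonneg_left hkey (show (0:ℝ) ≤ 4 * ε / 10 by positivity)
    nlinarith [h4]
  constructor
  · have := abs_sub_abs_le_abs_sub (β' j - γ' j) (β' j - β j)
    have e : β' j - γ' j - (β' j - β j) = β j - γ' j := by ring
    rw [e] at this
    have hb : |β' j - β j| = |β j - β' j| := abs_sub_comm _ _
    rw [hb] at this
    linarith
  · have e : β j - γ' j = (β j - β' j) + (β' j - γ' j) := by ring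
    calc |β j - γ' j| ≤ |β j - β' j| + |β' j - γ' j| := by rw [e]; exact abs_add_le _ _
      _ ≤ 4 * ε / 10 * (1 + c) * dβ' + (1 / δ₁) * dβ' := add_le_add hov h3'
      _ = (1 / δ₁ + 4 * ε / 10 * (1 + c)) * dβ' := by ring
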